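/- Let w be a weight on ℝ^d satisfying the local A₁ condition Mw(x) ≤ C₀ w(x) for almost every x in the support of w. Then for every 1 < p < ∞ there exists a constant C, depending only on C₀, p, and d, such that for every measurable function f with supp f ⊆ supp w one has ∫ (Mf(x))^p w(x) dx ≤ C ∫ |f(x)|^p w(x) dx; that is, M is bounded on L^p(w). -/

import Mathlib

open MeasureTheory Filter Set Metric
open scoped ENNReal Topology NNReal

noncomputable section

/-- The closed axis-parallel cube centered at `c` with half-edge `r` in `ℝ^d`. -/
def cube {d : ℕ} (c : EuclideanSpace ℝ (Fin d)) (r : ℝ) : Set (EuclideanSpace ℝ (Fin d)) :=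
  {y | ∀ i, |y i - c i| ≤ r}

/-- The non-centered Hardy–Littlewood maximal function over axis-parallel cubes,
with values in `ℝ≥0∞`. -/
def maximal {d : ℕ} (f : EuclideanSpace ℝ (Fin d) → ℝ) (x : EuclideanSpace ℝ (Fin d)) : ℝ≥0∞ :=
  ⨆ (c : EuclideanSpace ℝ (Fin d)) (r : ℝ) (_ : 0 < r) (_ : x ∈ cube c r),
    (∫⁻ y in cube c r, (‖f y‖₊ : ℝ≥0∞)) / volume (cube c r)

/-- The centered Hardy–Littlewood maximal function over axis-parallel cubes. -/
def cmaximal {d : ℕ} (f : EuclideanSpace ℝ (Fin d) → ℝ) (x : EuclideanSpace ℝ (Fin d)) : ℝ≥0∞ :=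
  ⨆ (r : ℝ) (_ : 0 < r),
    (∫⁻ y in cube x r, (‖f y‖₊ : ℝ≥0∞)) / volume (cube x r)

variable {d : ℕ}


lemma mem_cube_self {x : EuclideanSpace ℝ (Fin d)} {r : ℝ} (hr : 0 ≤ r) : x ∈ cube x r := by
  intro i; simpa using hr

lemma cube_mono {c : EuclideanSpace ℝ (Fin d)} {r r' : ℝ} (h : r ≤ r') :
    cube c r ⊆ cube c r' := fun y hy i => (hy i).trans h

lemma measurableSet_cube {c : EuclideanSpace ℝ (Fin d)} {r : ℝ} : MeasurableSet (cube c r) := by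
  have : cube c r = ⋂ i, (fun y : EuclideanSpace ℝ (Fin d) => |y i - c i|) ⁻¹' Iic r := by
    ext y; simp [cube]
  rw [this]
  exact MeasurableSet.iInter fun i =>
    ((((EuclideanSpace.proj i : EuclideanSpace ℝ (Fin d) →L[ℝ] ℝ).continuous.sub
      continuous_const).abs).measurable) measurableSet_Iic

lemma volume_cube (c : EuclideanSpace ℝ (Fin d)) (r : ℝ) :
    volume (cube c r) = ENNReal.ofReal (2 * r) ^ d := by
  have hpre : cube c r =
      (MeasurableEquiv.toLp 2 (Fin d → ℝ)).symm ⁻¹' (Set.univ.pi fun i => Icc (c i - r) (c i + r)) := by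
    ext y
    simp only [cube, mem_setOf_eq, mem_preimage, Set.mem_pi, mem_univ, forall_true_left,
      mem_Icc, MeasurableEquiv.coe_toLp_symm]
    constructor
    · intro h i; have := abs_le.1 (h i); constructor <;> [linarith [this.1]; linarith [this.2]]
    · intro h i; rw [abs_le]; have := h i; constructor <;> [linarith [this.1]; linarith [this.2]]
  rw [hpre, (EuclideanSpace.volume_preserving_symm_measurableEquiv_toLp (Fin d)).measure_preimage
    (MeasurableSet.univ_pi fun i => measurableSet_Icc).nullMeasurableSet]
  rw [volume_pi_pi]
  simp only [Real.volume_Icc]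
  rw [Finset.prod_congr rfl (fun i _ => by ring_nf : ∀ i ∈ Finset.univ, ENNReal.ofReal (c i + r - (c i - r)) = ENNReal.ofReal (2*r)),
    Finset.prod_const]
  simp

def maximalLE {d : ℕ} (R : ℝ) (f : EuclideanSpace ℝ (Fin d) → ℝ) (x : EuclideanSpace ℝ (Fin d)) : ℝ≥0∞ :=
  ⨆ (c : EuclideanSpace ℝ (Fin d)) (r : ℝ) (_ : 0 < r) (_ : r ≤ R) (_ : x ∈ cube c r),
    (∫⁻ y in cube c r, (‖f y‖₊ : ℝ≥0∞)) / volume (cube c r)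


lemma volume_cube_pos (c : EuclideanSpace ℝ (Fin d)) {r : ℝ} (hr : 0 < r) :
    0 < volume (cube c r) := by
  rw [volume_cube]
  exact ENNReal.pow_pos (by simp [hr]) d

lemma volume_cube_ne_top (c : EuclideanSpace ℝ (Fin d)) (r : ℝ) :
    volume (cube c r) ≠ ∞ := by
  rw [volume_cube]
  exact ENNReal.pow_ne_top ENNReal.ofReal_ne_top

lemma le_maximal {f : EuclideanSpace ℝ (Fin d) → ℝ} {x c : EuclideanSpace ℝ (Fin d)} {r : ℝ}
    (hr : 0 < r) (hx : x ∈ cube c r) :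
    (∫⁻ y in cube c r, (‖f y‖₊ : ℝ≥0∞)) / volume (cube c r) ≤ maximal f x := by
  refine le_iSup_of_le c (le_iSup_of_le r ?_)
  simp [hr, hx]

lemma maximal_le {f : EuclideanSpace ℝ (Fin d) → ℝ} {x : EuclideanSpace ℝ (Fin d)} {b : ℝ≥0∞}
    (h : ∀ c r, 0 < r → x ∈ cube c r →
      (∫⁻ y in cube c r, (‖f y‖₊ : ℝ≥0∞)) / volume (cube c r) ≤ b) :
    maximal f x ≤ b :=
  iSup_le fun c => iSup_le fun r => iSup_le fun hr => iSup_le fun hx => h c r hr hx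

lemma lt_maximal {f : EuclideanSpace ℝ (Fin d) → ℝ} {x : EuclideanSpace ℝ (Fin d)} {a : ℝ≥0∞}
    (h : a < maximal f x) :
    ∃ c r, 0 < r ∧ x ∈ cube c r ∧
      a < (∫⁻ y in cube c r, (‖f y‖₊ : ℝ≥0∞)) / volume (cube c r) := by
  have := h
  simp only [maximal, lt_iSup_iff] at this
  obtain ⟨c, r, hx, hr, hlt⟩ := this
  exact ⟨c, r, hx, hr, hlt⟩

lemma le_maximalLE {R : ℝ} {f : EuclideanSpace ℝ (Fin d) → ℝ} {x c : EuclideanSpace ℝ (Fin d)}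
    {r : ℝ} (hr : 0 < r) (hR : r ≤ R) (hx : x ∈ cube c r) :
    (∫⁻ y in cube c r, (‖f y‖₊ : ℝ≥0∞)) / volume (cube c r) ≤ maximalLE R f x := by
  refine le_iSup_of_le c (le_iSup_of_le r ?_)
  simp [hr, hR, hx]

lemma lt_maximalLE {R : ℝ} {f : EuclideanSpace ℝ (Fin d) → ℝ} {x : EuclideanSpace ℝ (Fin d)}
    {a : ℝ≥0∞} (h : a < maximalLE R f x) :
    ∃ c r, 0 < r ∧ r ≤ R ∧ x ∈ cube c r ∧
      a < (∫⁻ y in cube c r, (‖f y‖₊ : ℝ≥0∞)) / volume (cube c r) := by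
  have := h
  simp only [maximalLE, lt_iSup_iff] at this
  obtain ⟨c, r, hx, hR, hr, hlt⟩ := this
  exact ⟨c, r, hx, hR, hr, hlt⟩

lemma maximalLE_le_maximal (R : ℝ) (f : EuclideanSpace ℝ (Fin d) → ℝ)
    (x : EuclideanSpace ℝ (Fin d)) : maximalLE R f x ≤ maximal f x := by
  refine iSup_le fun c => iSup_le fun r => iSup_le fun hr => iSup_le fun _ => iSup_le fun hx => ?_
  exact le_maximal hr hx

lemma maximalLE_mono {R R' : ℝ} (h : R ≤ R') (f : EuclideanSpace ℝ (Fin d) → ℝ)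
    (x : EuclideanSpace ℝ (Fin d)) : maximalLE R f x ≤ maximalLE R' f x := by
  refine iSup_le fun c => iSup_le fun r => iSup_le fun hr => iSup_le fun hR => iSup_le fun hx => ?_
  exact le_maximalLE hr (hR.trans h) hx

lemma maximal_eq_iSup_maximalLE (f : EuclideanSpace ℝ (Fin d) → ℝ)
    (x : EuclideanSpace ℝ (Fin d)) : maximal f x = ⨆ n : ℕ, maximalLE n f x := by
  apply le_antisymm
  · refine maximal_le fun c r hr hx => ?_
    obtain ⟨n, hn⟩ := exists_nat_ge r
    exact le_iSup_of_le n (le_maximalLE hr hn hx)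
  · exact iSup_le fun n => maximalLE_le_maximal _ f x

lemma measurable_maximal (f : EuclideanSpace ℝ (Fin d) → ℝ) : Measurable (maximal f) := by
  have lsc : LowerSemicontinuous (maximal f) := by
    rw [lowerSemicontinuous_iff_isOpen_preimage]
    intro t
    rw [isOpen_iff_mem_nhds]
    rintro x (hx : t < maximal f x)
    obtain ⟨c, r, hr, hxc, hlt⟩ := lt_maximal hx
    set I := ∫⁻ y in cube c r, (‖f y‖₊ : ℝ≥0∞) with hI
    have ht : t ≠ ∞ := fun h => by
      rw [h] at hlt; exact (not_top_lt hlt)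
    have hmul : t * volume (cube c r) < I := by
      rwa [ENNReal.lt_div_iff_mul_lt (Or.inl (volume_cube_pos c hr).ne')
        (Or.inl (volume_cube_ne_top c r))] at hlt
    -- find ε > 0 with t * volume (cube c (r+ε)) < I
    have cont : ContinuousAt (fun ε : ℝ => t * volume (cube c (r + ε))) 0 := by
      have : (fun ε : ℝ => t * volume (cube c (r + ε)))
          = (fun ε : ℝ => t * ENNReal.ofReal (2 * (r + ε)) ^ d) := by
        funext ε; rw [volume_cube]
      rw [this]
      exact (ENNReal.continuous_const_mul ht).continuousAt.comp <|
        ((ENNReal.continuous_pow d).continuousAt.comp <|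
          (ENNReal.continuous_ofReal.continuousAt.comp <|
            (continuous_const.mul (continuous_const.add continuous_id)).continuousAt))
    have h0 : (fun ε : ℝ => t * volume (cube c (r + ε))) 0 < I := by simpa using hmul
    have hev : ∀ᶠ ε : ℝ in 𝓝 0, t * volume (cube c (r + ε)) < I :=
      cont.eventually_lt_const h0
    obtain ⟨ε, hεlt, hε⟩ : ∃ ε : ℝ, t * volume (cube c (r + ε)) < I ∧ 0 < ε := by
      have := (hev.filter_mono (nhdsWithin_le_nhds (s := Ioi (0:ℝ)))).and
        (eventually_mem_nhdsWithin (s := Ioi (0:ℝ)) (a := (0:ℝ)))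
      exact this.exists
    -- the open cube of radius r+ε around c works
    refine Filter.mem_of_superset (IsOpen.mem_nhds (s := {y | ∀ i, |y i - c i| < r + ε}) ?_ ?_) ?_
    · have : {y : EuclideanSpace ℝ (Fin d) | ∀ i, |y i - c i| < r + ε}
          = ⋂ i, (fun y : EuclideanSpace ℝ (Fin d) => |y i - c i|) ⁻¹' Iio (r + ε) := by
        ext y; simp
      rw [this]
      exact isOpen_iInter_of_finite fun i =>
        IsOpen.preimage (((EuclideanSpace.proj i : EuclideanSpace ℝ (Fin d) →L[ℝ] ℝ).continuous.sub
          continuous_const).abs) isOpen_Iio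
    · intro i; exact lt_of_le_of_lt (hxc i) (by linarith)
    · intro y hy
      have hy' : y ∈ cube c (r + ε) := fun i => (hy i).le
      have hsub : cube c r ⊆ cube c (r + ε) := fun z hz i => (hz i).trans (by linarith)
      have hIle : I ≤ ∫⁻ z in cube c (r + ε), (‖f z‖₊ : ℝ≥0∞) :=
        lintegral_mono_set hsub
      have : t < (∫⁻ z in cube c (r + ε), (‖f z‖₊ : ℝ≥0∞)) / volume (cube c (r + ε)) := by
        rw [ENNReal.lt_div_iff_mul_lt (Or.inl (volume_cube_pos c (by linarith)).ne')
          (Or.inl (volume_cube_ne_top c _))]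
        exact lt_of_lt_of_le hεlt hIle
      exact this.trans_le (le_maximal (by linarith) hy')
  exact lsc.measurable


lemma isOpen_opencube (c : EuclideanSpace ℝ (Fin d)) (r : ℝ) :
    IsOpen {y : EuclideanSpace ℝ (Fin d) | ∀ i, |y i - c i| < r} := by
  have : {y : EuclideanSpace ℝ (Fin d) | ∀ i, |y i - c i| < r}
      = ⋂ i, (fun y : EuclideanSpace ℝ (Fin d) => |y i - c i|) ⁻¹' Iio r := by
    ext y; simp
  rw [this]
  exact isOpen_iInter_of_finite fun i =>
    IsOpen.preimage (((EuclideanSpace.proj i : EuclideanSpace ℝ (Fin d) →L[ℝ] ℝ).continuous.sub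
      continuous_const).abs) isOpen_Iio

lemma cube_interior_nonempty (c : EuclideanSpace ℝ (Fin d)) {r : ℝ} (hr : 0 < r) :
    (interior (cube c r)).Nonempty := by
  refine ⟨c, ?_⟩
  rw [mem_interior]
  exact ⟨{y | ∀ i, |y i - c i| < r}, fun y hy i => (hy i).le, isOpen_opencube c r,
    fun i => by simpa using hr⟩

lemma cube_subset_enlarge {c c' : EuclideanSpace ℝ (Fin d)} {r r' : ℝ}
    (h : (cube c r ∩ cube c' r').Nonempty) (hrr : r ≤ 2 * r') :
    cube c r ⊆ cube c' (5 * r') := by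
  obtain ⟨z, hz, hz'⟩ := h
  intro y hy i
  have h1 : |y i - c i| ≤ r := hy i
  have h2 : |z i - c i| ≤ r := hz i
  have h3 : |z i - c' i| ≤ r' := hz' i
  have : |y i - c' i| ≤ |y i - c i| + |z i - c i| + |z i - c' i| := by
    have := abs_sub_le (y i) (z i) (c' i)
    have h4 : |y i - z i| ≤ |y i - c i| + |z i - c i| := by
      have := abs_sub_le (y i) (c i) (z i)
      simpa [abs_sub_comm (c i) (z i)] using this
    linarith
  linarith

section WeakType

variable {w : EuclideanSpace ℝ (Fin d) → ℝ}

/-- Weighted weak type bound for the truncated maximal function. -/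
lemma weaktypeLE (hw0 : ∀ x, 0 ≤ w x)
    {g : EuclideanSpace ℝ (Fin d) → ℝ} (hg : Measurable g) (R : ℝ)
    {a : ℝ≥0∞} (ha0 : a ≠ 0) (hatop : a ≠ ∞) :
    (volume.withDensity fun x => ENNReal.ofReal (w x)) {x | a < maximalLE R g x} ≤
      ENNReal.ofReal 5 ^ d / a * ∫⁻ y, (‖g y‖₊ : ℝ≥0∞) * maximal w y := by
  set ν := volume.withDensity fun x => ENNReal.ofReal (w x) with hν
  set k : ℝ≥0∞ := ENNReal.ofReal 5 ^ d with hk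
  have hk0 : k ≠ 0 := (ENNReal.pow_pos (by norm_num) d).ne'
  have hktop : k ≠ ∞ := ENNReal.pow_ne_top ENNReal.ofReal_ne_top
  set E := {x : EuclideanSpace ℝ (Fin d) | a < maximalLE R g x} with hE
  -- per-cube estimate
  have percube : ∀ (c : EuclideanSpace ℝ (Fin d)) (r : ℝ), 0 < r →
      a * volume (cube c r) < (∫⁻ y in cube c r, (‖g y‖₊ : ℝ≥0∞)) →
      ν (cube c (5 * r)) ≤ k / a * ∫⁻ y in cube c r, (‖g y‖₊ : ℝ≥0∞) * maximal w y := by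
    intro c r hr hint
    set V := volume (cube c r) with hV
    have hV0 : V ≠ 0 := (volume_cube_pos c hr).ne'
    have hVtop : V ≠ ∞ := volume_cube_ne_top c r
    have hV5 : volume (cube c (5 * r)) = k * V := by
      rw [hV, volume_cube, volume_cube, hk, ← mul_pow, ← ENNReal.ofReal_mul (by norm_num)]
      ring_nf
    set ν5 := ν (cube c (5 * r)) with hν5
    have hν5eq : ν5 = ∫⁻ y in cube c (5 * r), (‖w y‖₊ : ℝ≥0∞) := by
      rw [hν5, hν, withDensity_apply _ measurableSet_cube]
      exact setLIntegral_congr_fun measurableSet_cube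
        (fun y _ => ((Real.enorm_eq_ofReal (hw0 y)).symm))
    have hm : ∀ y ∈ cube c r, ν5 / (k * V) ≤ maximal w y := by
      intro y hy
      rw [hν5eq, ← hV5]
      exact le_maximal (by linarith) (cube_mono (by linarith) hy)
    set X := ∫⁻ y in cube c r, (‖g y‖₊ : ℝ≥0∞) * maximal w y with hX
    have step1 : ν5 / (k * V) * (a * V) ≤ X := by
      calc ν5 / (k * V) * (a * V) ≤ ν5 / (k * V) * ∫⁻ y in cube c r, (‖g y‖₊ : ℝ≥0∞) :=
            mul_le_mul_right hint.le _
        _ = ∫⁻ y in cube c r, (‖g y‖₊ : ℝ≥0∞) * (ν5 / (k * V)) := by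
            rw [lintegral_mul_const'' _ (hg.nnnorm.coe_nnreal_ennreal.aemeasurable), mul_comm]
        _ ≤ X := setLIntegral_mono' measurableSet_cube fun y hy =>
            mul_le_mul_right (hm y hy) _
    have step2 : ν5 * a ≤ X * k := by
      have hkV0 : k * V ≠ 0 := by simp [hk0, hV0]
      have hkVtop : k * V ≠ ∞ := ENNReal.mul_ne_top hktop hVtop
      have hcancel : (k * V)⁻¹ * (k * V) = 1 := ENNReal.inv_mul_cancel hkV0 hkVtop
      have : ν5 * a = ν5 / (k * V) * (a * V) * k := by
        rw [div_eq_mul_inv]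
        calc ν5 * a = ν5 * ((k * V)⁻¹ * (k * V)) * a := by rw [hcancel, mul_one]
          _ = ν5 * (k * V)⁻¹ * (a * V) * k := by ring
      rw [this]
      exact mul_le_mul_left step1 k
    have h3 : ν5 ≤ X * k / a := by
      rw [ENNReal.le_div_iff_mul_le (Or.inl ha0) (Or.inl hatop)]
      exact step2
    calc ν5 ≤ X * k / a := h3
      _ = k / a * X := by rw [div_eq_mul_inv, div_eq_mul_inv]; ring
  -- choose cubes for each point of E
  have hch : ∀ x : E, ∃ cr : EuclideanSpace ℝ (Fin d) × ℝ, 0 < cr.2 ∧ cr.2 ≤ R ∧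
      (x : EuclideanSpace ℝ (Fin d)) ∈ cube cr.1 cr.2 ∧
      a * volume (cube cr.1 cr.2) < ∫⁻ y in cube cr.1 cr.2, (‖g y‖₊ : ℝ≥0∞) := by
    rintro ⟨x, hx⟩
    obtain ⟨c, r, hr, hR, hxc, hlt⟩ := lt_maximalLE hx
    refine ⟨(c, r), hr, hR, hxc, ?_⟩
    rwa [ENNReal.lt_div_iff_mul_lt (Or.inl (volume_cube_pos c hr).ne')
      (Or.inl (volume_cube_ne_top c r))] at hlt
  choose Q hQr hQR hQmem hQint using hch
  obtain ⟨u, -, hdisj, hcov⟩ := Vitali.exists_disjoint_subfamily_covering_enlargement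
    (fun x : E => cube (Q x).1 (Q x).2) univ (fun x => (Q x).2) 2 one_lt_two
    (fun x _ => (hQr x).le) R (fun x _ => hQR x)
    (fun x _ => ⟨(x : EuclideanSpace ℝ (Fin d)), hQmem x⟩)
  have hu_count : u.Countable :=
    hdisj.countable_of_nonempty_interior fun x _ => cube_interior_nonempty _ (hQr x)
  have hu : Countable u := hu_count.to_subtype
  have hcover : E ⊆ ⋃ b ∈ u, cube (Q b).1 (5 * (Q b).2) := by
    intro x hx
    obtain ⟨b, hb, hinter, hle⟩ := hcov ⟨x, hx⟩ (mem_univ _)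
    refine mem_biUnion hb ?_
    exact cube_subset_enlarge hinter hle (hQmem ⟨x, hx⟩)
  haveI : Countable ↥u := hu_count.to_subtype
  have hdisj' : Pairwise (Function.onFun Disjoint fun b : ↥u => cube (Q b.1).1 (Q b.1).2) :=
    fun i j hij => hdisj i.2 j.2 (Subtype.coe_injective.ne hij)
  calc ν E ≤ ν (⋃ b ∈ u, cube (Q b).1 (5 * (Q b).2)) := measure_mono hcover
    _ ≤ ∑' b : ↥u, ν (cube (Q b.1).1 (5 * (Q b.1).2)) := measure_biUnion_le ν hu_count _
    _ ≤ ∑' b : ↥u, k / a * ∫⁻ y in cube (Q b.1).1 (Q b.1).2, (‖g y‖₊ : ℝ≥0∞) * maximal w y :=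
        ENNReal.tsum_le_tsum fun b => percube _ _ (hQr b.1) (hQint b.1)
    _ = k / a * ∑' b : ↥u, ∫⁻ y in cube (Q b.1).1 (Q b.1).2, (‖g y‖₊ : ℝ≥0∞) * maximal w y :=
        ENNReal.tsum_mul_left
    _ = k / a * ∫⁻ y in ⋃ b : ↥u, cube (Q b.1).1 (Q b.1).2, (‖g y‖₊ : ℝ≥0∞) * maximal w y := by
        rw [lintegral_iUnion (fun b => measurableSet_cube) hdisj']
    _ ≤ k / a * ∫⁻ y, (‖g y‖₊ : ℝ≥0∞) * maximal w y :=
        mul_le_mul_right (setLIntegral_le_lintegral _ _) _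

/-- Weighted weak type bound for the full maximal function. -/
lemma weaktype_maximal (hw0 : ∀ x, 0 ≤ w x)
    {g : EuclideanSpace ℝ (Fin d) → ℝ} (hg : Measurable g)
    {a : ℝ≥0∞} (ha0 : a ≠ 0) (hatop : a ≠ ∞) :
    (volume.withDensity fun x => ENNReal.ofReal (w x)) {x | a < maximal g x} ≤
      ENNReal.ofReal 5 ^ d / a * ∫⁻ y, (‖g y‖₊ : ℝ≥0∞) * maximal w y := by
  have hset : {x : EuclideanSpace ℝ (Fin d) | a < maximal g x}
      = ⋃ n : ℕ, {x | a < maximalLE (n : ℝ) g x} := by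
    ext x
    simp only [mem_setOf_eq, mem_iUnion, maximal_eq_iSup_maximalLE, lt_iSup_iff]
  rw [hset, Directed.measure_iUnion]
  · exact iSup_le fun n => weaktypeLE hw0 hg _ ha0 hatop
  · intro m n
    refine ⟨max m n, fun x hx => lt_of_lt_of_le hx (maximalLE_mono ?_ g x),
      fun x hx => lt_of_lt_of_le hx (maximalLE_mono ?_ g x)⟩
    · exact_mod_cast le_max_left m n
    · exact_mod_cast le_max_right m n


end WeakType

lemma lint_Ioo_rpow {q : ℝ} (hq : -1 < q) {T : ℝ} (hT : 0 ≤ T) :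
    ∫⁻ t in Ioo (0:ℝ) T, ENNReal.ofReal (t ^ q) = ENNReal.ofReal (T ^ (q + 1) / (q + 1)) := by
  have hq1 : 0 < q + 1 := by linarith
  have hint : IntegrableOn (fun t : ℝ => t ^ q) (Ioo 0 T) := by
    have h := intervalIntegral.intervalIntegrable_rpow' (a := 0) (b := T) hq
    rw [intervalIntegrable_iff_integrableOn_Ioc_of_le hT] at h
    exact h.mono_set Ioo_subset_Ioc_self
  rw [← ofReal_integral_eq_lintegral_ofReal hint
    ((ae_restrict_iff' measurableSet_Ioo).2 (Filter.Eventually.of_forall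
      fun t ht => Real.rpow_nonneg ht.1.le q))]
  congr 1
  rw [← integral_Ioc_eq_integral_Ioo, ← intervalIntegral.integral_of_le hT,
    integral_rpow (Or.inl hq)]
  rw [Real.zero_rpow hq1.ne']
  ring_nf

lemma layer_inner {p : ℝ} (hp : 1 < p) (a : ℝ≥0∞) :
    ∫⁻ t in Ioi (0:ℝ), ENNReal.ofReal (p * t ^ (p - 1)) *
      ({t : ℝ | ENNReal.ofReal t < a}.indicator (fun _ => (1:ℝ≥0∞)) t) = a ^ p := by
  have hppos : (0:ℝ) < p := by linarith
  rcases eq_or_ne a ∞ with rfl | hatop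
  · -- a = ∞ : the integral is infinite
    have hset : {t : ℝ | ENNReal.ofReal t < (∞ : ℝ≥0∞)} = univ := by
      ext t; simp [ENNReal.ofReal_lt_top]
    rw [hset]
    simp only [indicator_univ, mul_one]
    rw [ENNReal.top_rpow_of_pos hppos]
    rw [eq_top_iff]
    calc (⊤ : ℝ≥0∞) = ENNReal.ofReal p * volume (Ioi (1:ℝ)) := by
          rw [Real.volume_Ioi, ENNReal.mul_top (by simp [hppos])]
      _ = ∫⁻ _ in Ioi (1:ℝ), ENNReal.ofReal p := by rw [setLIntegral_const, mul_comm]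
      _ ≤ ∫⁻ t in Ioi (1:ℝ), ENNReal.ofReal (p * t ^ (p - 1)) := by
          refine setLIntegral_mono' measurableSet_Ioi fun t ht => ?_
          refine ENNReal.ofReal_le_ofReal ?_
          nlinarith [Real.one_le_rpow (le_of_lt ht) (by linarith : (0:ℝ) ≤ p - 1)]
      _ ≤ ∫⁻ t in Ioi (0:ℝ), ENNReal.ofReal (p * t ^ (p - 1)) := by
          exact lintegral_mono_set (Ioi_subset_Ioi zero_le_one)
  · set T := a.toReal with hTdef
    have hT : 0 ≤ T := ENNReal.toReal_nonneg
    have haT : a = ENNReal.ofReal T := (ENNReal.ofReal_toReal hatop).symm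
    have hfun : ∀ t ∈ Ioi (0:ℝ), ENNReal.ofReal (p * t ^ (p - 1)) *
        ({t : ℝ | ENNReal.ofReal t < a}.indicator (fun _ => (1:ℝ≥0∞)) t)
        = (Ioo (0:ℝ) T).indicator (fun t => ENNReal.ofReal p * ENNReal.ofReal (t ^ (p - 1))) t := by
      intro t ht
      have ht0 : 0 < t := ht
      have hiff : ENNReal.ofReal t < a ↔ t < T :=
        ENNReal.ofReal_lt_iff_lt_toReal ht0.le hatop
      by_cases h : t < T
      · rw [indicator_of_mem (by simp [mem_setOf_eq, hiff, h]),
          indicator_of_mem (by exact ⟨ht0, h⟩), mul_one,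
          ENNReal.ofReal_mul hppos.le]
      · rw [indicator_of_notMem (by simp [mem_setOf_eq, hiff, h]),
          indicator_of_notMem (by simp [mem_Ioo]; intro _; exact le_of_not_gt h), mul_zero]
    rw [setLIntegral_congr_fun measurableSet_Ioi hfun]
    rw [lintegral_indicator measurableSet_Ioo _, Measure.restrict_restrict measurableSet_Ioo,
      inter_eq_self_of_subset_left Ioo_subset_Ioi_self,
      lintegral_const_mul' _ _ ENNReal.ofReal_ne_top,
      lint_Ioo_rpow (by linarith) hT]
    have : p - 1 + 1 = p := by ring
    rw [this, ← ENNReal.ofReal_mul hppos.le, mul_div_cancel₀ _ (ne_of_gt hppos)]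
    rcases eq_or_lt_of_le hT with h0 | hTpos
    · rw [haT, ← h0]
      simp [Real.zero_rpow (ne_of_gt hppos), ENNReal.zero_rpow_of_pos hppos]
    · rw [haT, ENNReal.ofReal_rpow_of_pos hTpos]

lemma layercake {α : Type*} [MeasurableSpace α] (ν : Measure α) [SFinite ν]
    {g : α → ℝ≥0∞} (hg : Measurable g) {p : ℝ} (hp : 1 < p) :
    ∫⁻ x, g x ^ p ∂ν
      = ∫⁻ t in Ioi (0:ℝ), ENNReal.ofReal (p * t ^ (p - 1)) * ν {x | ENNReal.ofReal t < g x} := by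
  have hS : MeasurableSet {z : ℝ × α | ENNReal.ofReal z.1 < g z.2} :=
    measurableSet_lt (ENNReal.measurable_ofReal.comp measurable_fst) (hg.comp measurable_snd)
  have hmeas : Measurable fun z : ℝ × α =>
      ENNReal.ofReal (p * z.1 ^ (p - 1)) *
        ({z : ℝ × α | ENNReal.ofReal z.1 < g z.2}.indicator (fun _ => (1:ℝ≥0∞)) z) := by
    refine Measurable.mul ?_ (measurable_const.indicator hS)
    exact ENNReal.measurable_ofReal.comp
      ((measurable_const.mul (measurable_fst.pow_const _)).comp measurable_id)
  have hslice : ∀ (t : ℝ) (x : α),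
      ({z : ℝ × α | ENNReal.ofReal z.1 < g z.2}.indicator (fun _ => (1:ℝ≥0∞)) (t, x))
        = ({x : α | ENNReal.ofReal t < g x}.indicator (fun _ => (1:ℝ≥0∞)) x) := fun t x => rfl
  have hslice' : ∀ (t : ℝ) (x : α),
      ({z : ℝ × α | ENNReal.ofReal z.1 < g z.2}.indicator (fun _ => (1:ℝ≥0∞)) (t, x))
        = ({t : ℝ | ENNReal.ofReal t < g x}.indicator (fun _ => (1:ℝ≥0∞)) t) := fun t x => rfl
  calc ∫⁻ x, g x ^ p ∂ν
      = ∫⁻ x, (∫⁻ t in Ioi (0:ℝ), ENNReal.ofReal (p * t ^ (p - 1)) *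
          ({z : ℝ × α | ENNReal.ofReal z.1 < g z.2}.indicator (fun _ => (1:ℝ≥0∞)) (t, x))) ∂ν := by
        refine lintegral_congr fun x => ?_
        simp_rw [hslice']
        exact (layer_inner hp (g x)).symm
    _ = ∫⁻ t in Ioi (0:ℝ), (∫⁻ x, ENNReal.ofReal (p * t ^ (p - 1)) *
          ({z : ℝ × α | ENNReal.ofReal z.1 < g z.2}.indicator (fun _ => (1:ℝ≥0∞)) (t, x)) ∂ν) := by
        exact lintegral_lintegral_swap (f := fun x t => ENNReal.ofReal (p * t ^ (p - 1)) *
          ({z : ℝ × α | ENNReal.ofReal z.1 < g z.2}.indicator (fun _ => (1:ℝ≥0∞)) (t, x)))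
          (hmeas.comp measurable_swap).aemeasurable
    _ = ∫⁻ t in Ioi (0:ℝ), ENNReal.ofReal (p * t ^ (p - 1)) * ν {x | ENNReal.ofReal t < g x} := by
        refine lintegral_congr fun t => ?_
        rw [lintegral_const_mul' _ _ ENNReal.ofReal_ne_top]
        congr 1
        simp_rw [hslice]
        exact lintegral_indicator_one (hg measurableSet_Ioi)

lemma maximal_le_add {f g : EuclideanSpace ℝ (Fin d) → ℝ} {s : ℝ} (hs : 0 ≤ s)
    (h : ∀ y, |f y| ≤ |g y| + s) (x : EuclideanSpace ℝ (Fin d)) :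
    maximal f x ≤ maximal g x + ENNReal.ofReal s := by
  refine maximal_le fun c r hr hx => ?_
  have h1 : (∫⁻ y in cube c r, (‖f y‖₊ : ℝ≥0∞))
      ≤ (∫⁻ y in cube c r, (‖g y‖₊ : ℝ≥0∞)) + ENNReal.ofReal s * volume (cube c r) := by
    calc ∫⁻ y in cube c r, (‖f y‖₊ : ℝ≥0∞)
        ≤ ∫⁻ y in cube c r, ((‖g y‖₊ : ℝ≥0∞) + ENNReal.ofReal s) := by
          refine lintegral_mono fun y => ?_
          rw [← enorm_eq_nnnorm, ← enorm_eq_nnnorm, ← ofReal_norm, ← ofReal_norm]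
          calc ENNReal.ofReal ‖f y‖ ≤ ENNReal.ofReal (‖g y‖ + s) :=
                ENNReal.ofReal_le_ofReal (by simpa [Real.norm_eq_abs] using h y)
            _ ≤ _ := ENNReal.ofReal_add_le
      _ = _ := by rw [lintegral_add_right _ measurable_const, setLIntegral_const]
  calc (∫⁻ y in cube c r, (‖f y‖₊ : ℝ≥0∞)) / volume (cube c r)
      ≤ ((∫⁻ y in cube c r, (‖g y‖₊ : ℝ≥0∞)) + ENNReal.ofReal s * volume (cube c r))
        / volume (cube c r) := ENNReal.div_le_div_right h1 _
    _ = (∫⁻ y in cube c r, (‖g y‖₊ : ℝ≥0∞)) / volume (cube c r)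
        + (ENNReal.ofReal s * volume (cube c r)) / volume (cube c r) := ENNReal.add_div
    _ ≤ maximal g x + ENNReal.ofReal s := by
        refine add_le_add (le_maximal hr hx) ?_
        rw [mul_div_assoc]
        calc ENNReal.ofReal s * (volume (cube c r) / volume (cube c r))
            ≤ ENNReal.ofReal s * 1 := mul_le_mul_right ENNReal.div_self_le_one _
          _ = ENNReal.ofReal s := mul_one _

lemma tonelli2 {f : EuclideanSpace ℝ (Fin d) → ℝ} (hf : Measurable f)
    {W : EuclideanSpace ℝ (Fin d) → ℝ≥0∞} (hW : Measurable W) {q : ℝ} (hq : -1 < q) :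
    ∫⁻ t in Ioi (0:ℝ), ENNReal.ofReal (t ^ q) *
        (∫⁻ y, ({z : ℝ × EuclideanSpace ℝ (Fin d) | z.1 < 2 * |f z.2|}.indicator
          (fun _ => (1:ℝ≥0∞)) (t, y)) * ((‖f y‖₊ : ℝ≥0∞) * W y))
      = ∫⁻ y, ENNReal.ofReal ((2 * |f y|) ^ (q + 1) / (q + 1)) * ((‖f y‖₊ : ℝ≥0∞) * W y) := by
  have hSm : MeasurableSet {z : ℝ × EuclideanSpace ℝ (Fin d) | z.1 < 2 * |f z.2|} :=
    measurableSet_lt measurable_fst ((hf.abs.const_mul 2).comp measurable_snd)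
  have hmeas : Measurable fun z : ℝ × EuclideanSpace ℝ (Fin d) =>
      ENNReal.ofReal (z.1 ^ q) * (({z : ℝ × EuclideanSpace ℝ (Fin d) | z.1 < 2 * |f z.2|}.indicator
        (fun _ => (1:ℝ≥0∞)) z) * ((‖f z.2‖₊ : ℝ≥0∞) * W z.2)) := by
    refine Measurable.mul ?_ (Measurable.mul (measurable_const.indicator hSm) ?_)
    · exact ENNReal.measurable_ofReal.comp (measurable_fst.pow_const q)
    · exact (hf.nnnorm.coe_nnreal_ennreal.mul hW).comp measurable_snd
  calc ∫⁻ t in Ioi (0:ℝ), ENNReal.ofReal (t ^ q) *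
        (∫⁻ y, ({z : ℝ × EuclideanSpace ℝ (Fin d) | z.1 < 2 * |f z.2|}.indicator
          (fun _ => (1:ℝ≥0∞)) (t, y)) * ((‖f y‖₊ : ℝ≥0∞) * W y))
      = ∫⁻ t in Ioi (0:ℝ), (∫⁻ y, ENNReal.ofReal (t ^ q) *
          (({z : ℝ × EuclideanSpace ℝ (Fin d) | z.1 < 2 * |f z.2|}.indicator
            (fun _ => (1:ℝ≥0∞)) (t, y)) * ((‖f y‖₊ : ℝ≥0∞) * W y))) := by
        refine lintegral_congr fun t => ?_
        rw [lintegral_const_mul' _ _ ENNReal.ofReal_ne_top]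
    _ = ∫⁻ y, (∫⁻ t in Ioi (0:ℝ), ENNReal.ofReal (t ^ q) *
          (({z : ℝ × EuclideanSpace ℝ (Fin d) | z.1 < 2 * |f z.2|}.indicator
            (fun _ => (1:ℝ≥0∞)) (t, y)) * ((‖f y‖₊ : ℝ≥0∞) * W y))) := by
        exact lintegral_lintegral_swap (f := fun t y => ENNReal.ofReal (t ^ q) *
          (({z : ℝ × EuclideanSpace ℝ (Fin d) | z.1 < 2 * |f z.2|}.indicator
            (fun _ => (1:ℝ≥0∞)) (t, y)) * ((‖f y‖₊ : ℝ≥0∞) * W y))) hmeas.aemeasurable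
    _ = ∫⁻ y, ENNReal.ofReal ((2 * |f y|) ^ (q + 1) / (q + 1)) * ((‖f y‖₊ : ℝ≥0∞) * W y) := by
        refine lintegral_congr fun y => ?_
        have hrw : ∀ t : ℝ, ENNReal.ofReal (t ^ q) *
            (({z : ℝ × EuclideanSpace ℝ (Fin d) | z.1 < 2 * |f z.2|}.indicator
              (fun _ => (1:ℝ≥0∞)) (t, y)) * ((‖f y‖₊ : ℝ≥0∞) * W y))
            = ((Iio (2 * |f y|)).indicator (fun t => ENNReal.ofReal (t ^ q)) t)
              * ((‖f y‖₊ : ℝ≥0∞) * W y) := by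
          intro t
          by_cases h : t < 2 * |f y|
          · rw [indicator_of_mem (by exact h), indicator_of_mem (by exact h), one_mul]
          · rw [indicator_of_notMem (by exact h), indicator_of_notMem (by exact h),
              zero_mul, mul_zero]
        simp_rw [hrw]
        have hm1 : Measurable fun t : ℝ => ENNReal.ofReal (t ^ q) :=
          ENNReal.measurable_ofReal.comp (measurable_id.pow_const q)
        rw [lintegral_mul_const'' _ (hm1.indicator measurableSet_Iio).aemeasurable]
        congr 1
        rw [lintegral_indicator measurableSet_Iio, Measure.restrict_restrict measurableSet_Iio,
          Set.Iio_inter_Ioi, lint_Ioo_rpow hq (by positivity)]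

/-- **Local `A₁` implies `M` is bounded on `Lᵖ(w)`.** If `Mw ≤ C₀ w` a.e. on the
support of `w`, then for each `1 < p < ∞` there is a constant `C` (depending only on
`C₀`, `p`, `d`) such that `∫ (Mf)^p w ≤ C ∫ |f|^p w` for all `f` supported in
`supp w`. -/
theorem maximal_bounded_on_Lp_of_local_A1
    (d : ℕ) (w : EuclideanSpace ℝ (Fin d) → ℝ)
    (hw0 : 0 ≤ w) (hw : LocallyIntegrable w volume) (C₀ : ℝ)
    (hA1 : ∀ᵐ x ∂(volume : Measure (EuclideanSpace ℝ (Fin d))),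
      x ∈ Function.support w → maximal w x ≤ ENNReal.ofReal (C₀ * w x))
    (p : ℝ) (hp : 1 < p) :
    ∃ C : ℝ, 0 < C ∧
      ∀ f : EuclideanSpace ℝ (Fin d) → ℝ, Measurable f →
        Function.support f ⊆ Function.support w →
        ∫⁻ x, maximal f x ^ p * ENNReal.ofReal (w x)
          ≤ ENNReal.ofReal C * ∫⁻ x, (‖f x‖₊ : ℝ≥0∞) ^ p * ENNReal.ofReal (w x) := by
  classical
  have hp0 : (0:ℝ) < p := lt_trans one_pos hp
  -- measurable nonnegative representative of the weight
  set w₀ := hw.aestronglyMeasurable.mk w with hw₀def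
  set w' : EuclideanSpace ℝ (Fin d) → ℝ := fun x => max (w₀ x) 0 with hw'def
  have hw'meas : Measurable w' :=
    hw.aestronglyMeasurable.stronglyMeasurable_mk.measurable.max measurable_const
  have hw'0 : ∀ x, 0 ≤ w' x := fun x => le_max_right _ _
  have hww' : w =ᵐ[volume] w' := by
    filter_upwards [hw.aestronglyMeasurable.ae_eq_mk] with x hx
    have hx' : w₀ x = w x := by rw [hw₀def, ← hx]
    simp only [hw'def]
    rw [hx']
    exact (max_eq_left (hw0 x)).symm
  have hcubeint : ∀ (c : EuclideanSpace ℝ (Fin d)) (r : ℝ),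
      (∫⁻ y in cube c r, (‖w y‖₊ : ℝ≥0∞)) = ∫⁻ y in cube c r, (‖w' y‖₊ : ℝ≥0∞) := fun c r =>
    lintegral_congr_ae (ae_restrict_of_ae (hww'.mono fun y hy => by
      show (‖w y‖₊ : ℝ≥0∞) = (‖w' y‖₊ : ℝ≥0∞); rw [hy]))
  have hmaxeq : maximal w = maximal w' := by
    funext x
    unfold maximal
    exact iSup_congr fun c => iSup_congr fun r => by rw [hcubeint]
  set C₁ := max C₀ 1 with hC₁
  have hC₁pos : (0:ℝ) < C₁ := lt_of_lt_of_le one_pos (le_max_right _ _)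
  have hA1' : ∀ᵐ x ∂(volume : Measure (EuclideanSpace ℝ (Fin d))),
      x ∈ Function.support w → maximal w' x ≤ ENNReal.ofReal C₁ * ENNReal.ofReal (w' x) := by
    filter_upwards [hA1, hww'] with x h1 h2
    intro hx
    rw [← congrFun hmaxeq x]
    calc maximal w x ≤ ENNReal.ofReal (C₀ * w x) := h1 hx
      _ ≤ ENNReal.ofReal (C₁ * w' x) := by
          refine ENNReal.ofReal_le_ofReal ?_
          rw [← h2]
          exact mul_le_mul_of_nonneg_right (le_max_left _ _) (hw0 x)
      _ = ENNReal.ofReal C₁ * ENNReal.ofReal (w' x) := ENNReal.ofReal_mul hC₁pos.le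
  set C := (5:ℝ)^d * C₁ * (2*p) * (2^(p-1) / (p-1)) with hC
  have hCpos : 0 < C := by
    have h1 : (0:ℝ) < (5:ℝ)^d := by positivity
    have h2 : (0:ℝ) < 2^(p-1)/(p-1) :=
      div_pos (Real.rpow_pos_of_pos two_pos _) (by linarith)
    exact mul_pos (mul_pos (mul_pos h1 hC₁pos) (by linarith)) h2
  refine ⟨C, hCpos, ?_⟩
  intro f hf hsupp
  set W : EuclideanSpace ℝ (Fin d) → ℝ≥0∞ := fun x => ENNReal.ofReal (w' x) with hWdef
  have hWmeas : Measurable W := ENNReal.measurable_ofReal.comp hw'meas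
  set ν := volume.withDensity W with hνdef
  have hL : ∫⁻ x, maximal f x ^ p * ENNReal.ofReal (w x) = ∫⁻ x, maximal f x ^ p ∂ν := by
    rw [hνdef, lintegral_withDensity_eq_lintegral_mul volume hWmeas
      ((measurable_maximal f).pow_const p)]
    refine lintegral_congr_ae (hww'.mono fun x hx => ?_)
    simp only [Pi.mul_apply, hWdef]
    rw [hx, mul_comm]
  have hR : ∫⁻ x, (‖f x‖₊ : ℝ≥0∞) ^ p * ENNReal.ofReal (w x)
      = ∫⁻ x, (‖f x‖₊ : ℝ≥0∞) ^ p * W x := by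
    refine lintegral_congr_ae (hww'.mono fun x hx => ?_)
    rw [hWdef]; simp only; rw [hx]
  rw [hL, hR, layercake ν (measurable_maximal f) hp]
  -- truncations
  set g : ℝ → EuclideanSpace ℝ (Fin d) → ℝ := fun t => ({y | t < 2 * |f y|}).indicator f
    with hgdef
  have hgmeas : ∀ t, Measurable (g t) := fun t =>
    hf.indicator (measurableSet_lt measurable_const (hf.abs.const_mul 2))
  -- distribution function bound
  have key : ∀ t : ℝ, 0 < t → ν {x | ENNReal.ofReal t < maximal f x} ≤
      ENNReal.ofReal 5 ^ d / ENNReal.ofReal (t/2) *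
        (ENNReal.ofReal C₁ * ∫⁻ y, (‖g t y‖₊ : ℝ≥0∞) * W y) := by
    intro t ht
    have hsub : {x | ENNReal.ofReal t < maximal f x}
        ⊆ {x | ENNReal.ofReal (t/2) < maximal (g t) x} := by
      intro x hx
      rw [mem_setOf_eq] at hx ⊢
      by_contra hcon
      push_neg at hcon
      have hptw : ∀ y, |f y| ≤ |g t y| + t/2 := by
        intro y
        by_cases hy : t < 2 * |f y|
        · have : g t y = f y := indicator_of_mem (show y ∈ {y | t < 2 * |f y|} from hy) f
          rw [this]; linarith
        · have : g t y = 0 := indicator_of_notMem (show y ∉ {y | t < 2 * |f y|} from hy) f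
          rw [this]; simp only [abs_zero, zero_add]
          push_neg at hy; linarith
      have h2 := maximal_le_add (by linarith : (0:ℝ) ≤ t/2) hptw x
      have h3 : maximal f x ≤ ENNReal.ofReal t := by
        calc maximal f x ≤ maximal (g t) x + ENNReal.ofReal (t/2) := h2
          _ ≤ ENNReal.ofReal (t/2) + ENNReal.ofReal (t/2) := add_le_add_left hcon _
          _ = ENNReal.ofReal t := by
              rw [← ENNReal.ofReal_add (by linarith) (by linarith)]
              norm_num
      exact absurd hx (not_lt.2 h3)
    have step2 : ∫⁻ y, (‖g t y‖₊ : ℝ≥0∞) * maximal w' y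
        ≤ ENNReal.ofReal C₁ * ∫⁻ y, (‖g t y‖₊ : ℝ≥0∞) * W y := by
      rw [← lintegral_const_mul' _ _ ENNReal.ofReal_ne_top]
      refine lintegral_mono_ae ?_
      filter_upwards [hA1'] with y hy
      by_cases hzero : g t y = 0
      · simp [hzero]
      · have hyf : f y ≠ 0 := by
          intro h0
          apply hzero
          show ({y | t < 2 * |f y|}).indicator f y = 0
          by_cases hy2 : y ∈ {y | t < 2 * |f y|}
          · rw [indicator_of_mem hy2 f]; exact h0
          · exact indicator_of_notMem hy2 f
        have hmem : y ∈ Function.support w := hsupp hyf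
        calc (‖g t y‖₊ : ℝ≥0∞) * maximal w' y
            ≤ (‖g t y‖₊ : ℝ≥0∞) * (ENNReal.ofReal C₁ * W y) := mul_le_mul_right (hy hmem) _
          _ = ENNReal.ofReal C₁ * ((‖g t y‖₊ : ℝ≥0∞) * W y) := by ring
    calc ν {x | ENNReal.ofReal t < maximal f x}
        ≤ ν {x | ENNReal.ofReal (t/2) < maximal (g t) x} := measure_mono hsub
      _ ≤ ENNReal.ofReal 5 ^ d / ENNReal.ofReal (t/2)
            * ∫⁻ y, (‖g t y‖₊ : ℝ≥0∞) * maximal w' y :=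
          weaktype_maximal hw'0 (hgmeas t) (ENNReal.ofReal_pos.2 (by linarith)).ne'
            ENNReal.ofReal_ne_top
      _ ≤ _ := mul_le_mul_right step2 _
  -- main computation
  set K : ℝ≥0∞ := ENNReal.ofReal 5 ^ d * ENNReal.ofReal C₁ * ENNReal.ofReal (2*p) with hK
  have hKne : K ≠ ∞ := by
    rw [hK]
    exact ENNReal.mul_ne_top (ENNReal.mul_ne_top (ENNReal.pow_ne_top ENNReal.ofReal_ne_top)
      ENNReal.ofReal_ne_top) ENNReal.ofReal_ne_top
  have hind : ∀ (t : ℝ) (y : EuclideanSpace ℝ (Fin d)), (‖g t y‖₊ : ℝ≥0∞) * W y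
      = ({z : ℝ × EuclideanSpace ℝ (Fin d) | z.1 < 2 * |f z.2|}.indicator
          (fun _ => (1:ℝ≥0∞)) (t, y)) * ((‖f y‖₊ : ℝ≥0∞) * W y) := by
    intro t y
    by_cases h : t < 2 * |f y|
    · have h1 : g t y = f y := indicator_of_mem (show y ∈ {y | t < 2 * |f y|} from h) f
      rw [h1, indicator_of_mem (by exact h), one_mul]
    · have h1 : g t y = 0 := indicator_of_notMem (show y ∉ {y | t < 2 * |f y|} from h) f
      rw [h1, indicator_of_notMem (by exact h), zero_mul]
      simp
  have pointeq : ∀ y : EuclideanSpace ℝ (Fin d),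
      ENNReal.ofReal ((2 * |f y|) ^ (p - 2 + 1) / (p - 2 + 1)) * ((‖f y‖₊ : ℝ≥0∞) * W y)
      = ENNReal.ofReal (2^(p-1) / (p-1)) * ((‖f y‖₊ : ℝ≥0∞) ^ p * W y) := by
    intro y
    have hp21 : p - 2 + 1 = p - 1 := by ring
    rw [hp21]
    by_cases hfy : f y = 0
    · rw [hfy]
      simp [Real.zero_rpow (show p - 1 ≠ 0 by linarith), ENNReal.zero_rpow_of_pos hp0]
    · have habs : 0 < |f y| := abs_pos.2 hfy
      have hnn : (‖f y‖₊ : ℝ≥0∞) = ENNReal.ofReal |f y| := by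
        rw [← Real.nnnorm_abs, ← enorm_eq_nnnorm, Real.enorm_eq_ofReal (abs_nonneg _)]
      have hpowp : (‖f y‖₊ : ℝ≥0∞) ^ p = ENNReal.ofReal (|f y| ^ p) := by
        rw [hnn, ← ENNReal.ofReal_rpow_of_nonneg (abs_nonneg _) hp0.le]
      rw [hpowp, hnn, ← mul_assoc, ← mul_assoc,
        ← ENNReal.ofReal_mul (div_nonneg (Real.rpow_nonneg (by positivity) _) (by linarith)),
        ← ENNReal.ofReal_mul (div_nonneg (Real.rpow_nonneg (by norm_num) _) (by linarith))]
      congr 2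
      have hh : |f y| ^ p = |f y| ^ (p-1) * |f y| := by
        nth_rewrite 1 [show p = (p-1) + 1 by ring]
        rw [Real.rpow_add habs, Real.rpow_one]
      rw [Real.mul_rpow (by norm_num) habs.le, hh]
      ring
  calc ∫⁻ t in Ioi (0:ℝ), ENNReal.ofReal (p * t ^ (p - 1))
        * ν {x | ENNReal.ofReal t < maximal f x}
      ≤ ∫⁻ t in Ioi (0:ℝ), K * (ENNReal.ofReal (t ^ (p-2))
          * ∫⁻ y, (‖g t y‖₊ : ℝ≥0∞) * W y) := by
        refine setLIntegral_mono' measurableSet_Ioi fun t ht => ?_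
        have ht0 : (0:ℝ) < t := ht
        have hdiv : ENNReal.ofReal (p * t^(p-1)) / ENNReal.ofReal (t/2)
            = ENNReal.ofReal (2*p) * ENNReal.ofReal (t^(p-2)) := by
          have hmerge : ENNReal.ofReal (2*p) * ENNReal.ofReal (t^(p-2))
              = ENNReal.ofReal (2*p*t^(p-2)) := (ENNReal.ofReal_mul (by linarith)).symm
          rw [hmerge, ← ENNReal.ofReal_div_of_pos (by linarith)]
          congr 1
          rw [show p - 1 = (p-2) + 1 by ring, Real.rpow_add ht0, Real.rpow_one]
          field_simp
        calc ENNReal.ofReal (p * t ^ (p - 1)) * ν {x | ENNReal.ofReal t < maximal f x}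
            ≤ ENNReal.ofReal (p * t ^ (p - 1)) * (ENNReal.ofReal 5 ^ d / ENNReal.ofReal (t/2) *
              (ENNReal.ofReal C₁ * ∫⁻ y, (‖g t y‖₊ : ℝ≥0∞) * W y)) :=
              mul_le_mul_right (key t ht0) _
          _ = (ENNReal.ofReal (p * t ^ (p - 1)) / ENNReal.ofReal (t/2)) * (ENNReal.ofReal 5 ^ d *
              (ENNReal.ofReal C₁ * ∫⁻ y, (‖g t y‖₊ : ℝ≥0∞) * W y)) := by
              simp only [div_eq_mul_inv]; ring
          _ = K * (ENNReal.ofReal (t ^ (p-2)) * ∫⁻ y, (‖g t y‖₊ : ℝ≥0∞) * W y) := by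
              rw [hdiv, hK]; ring
    _ = K * ∫⁻ t in Ioi (0:ℝ), ENNReal.ofReal (t ^ (p-2))
          * ∫⁻ y, (‖g t y‖₊ : ℝ≥0∞) * W y := lintegral_const_mul' _ _ hKne
    _ = K * ∫⁻ t in Ioi (0:ℝ), ENNReal.ofReal (t ^ (p-2)) *
          (∫⁻ y, ({z : ℝ × EuclideanSpace ℝ (Fin d) | z.1 < 2 * |f z.2|}.indicator
            (fun _ => (1:ℝ≥0∞)) (t, y)) * ((‖f y‖₊ : ℝ≥0∞) * W y)) := by
        congr 1
        refine lintegral_congr fun t => ?_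
        congr 1
        exact lintegral_congr fun y => hind t y
    _ = K * ∫⁻ y, ENNReal.ofReal ((2 * |f y|) ^ (p - 2 + 1) / (p - 2 + 1))
          * ((‖f y‖₊ : ℝ≥0∞) * W y) := by
        rw [tonelli2 hf hWmeas (by linarith : (-1:ℝ) < p - 2)]
    _ = K * (ENNReal.ofReal (2^(p-1) / (p-1)) * ∫⁻ y, (‖f y‖₊ : ℝ≥0∞) ^ p * W y) := by
        congr 1
        rw [← lintegral_const_mul' _ _ ENNReal.ofReal_ne_top]
        exact lintegral_congr fun y => pointeq y
    _ = ENNReal.ofReal C * ∫⁻ x, (‖f x‖₊ : ℝ≥0∞) ^ p * W x := by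
        rw [← mul_assoc, hK, hC]
        congr 1
        rw [← ENNReal.ofReal_pow (by norm_num : (0:ℝ) ≤ 5),
          ← ENNReal.ofReal_mul (by positivity), ← ENNReal.ofReal_mul (by positivity),
          ← ENNReal.ofReal_mul (by positivity)]
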